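/- Let P₀, P₁, …, P_k be probability measures on a common measurable space, let ε₁, …, ε_k ≥ 0 and δ ≥ 0, and suppose for each i ∈ {1, …, k} the pair (P_{i−1}, P_i) is (ε_i, δ)-indistinguishable. Set ε̃ = ε₁ + ⋯ + ε_k. Then (P₀, P_k) are (ε̃, k·e^{ε̃}·δ)-indistinguishable. -/

import Mathlib

open MeasureTheory Finset

/-- `(P, Q)` are `(ε, δ)`-indistinguishable: for every measurable set `S`,
`P(S) ≤ e^ε · Q(S) + δ`. -/
def Indist {X : Type*} [MeasurableSpace X] (P Q : Measure X) (ε δ : ℝ) : Prop :=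
  ∀ S : Set X, MeasurableSet S → (P S).toReal ≤ Real.exp ε * (Q S).toReal + δ

/-- Group confidentiality bound: a chain of `k` single-secret `(εᵢ, δ)` guarantees
yields a `(ε̃, k·e^{ε̃}·δ)` guarantee between the endpoints, where `ε̃ = ∑ᵢ εᵢ`. -/
theorem group_confidentiality_chain
    {X : Type*} [MeasurableSpace X] (k : ℕ) (P : ℕ → Measure X)
    (hP : ∀ i ≤ k, IsProbabilityMeasure (P i))
    (ε : ℕ → ℝ) (δ : ℝ) (hε : ∀ i < k, 0 ≤ ε i) (hδ : 0 ≤ δ)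
    (h : ∀ i < k, Indist (P i) (P (i + 1)) (ε i) δ) :
    Indist (P 0) (P k) (∑ i ∈ range k, ε i)
      ((k : ℝ) * Real.exp (∑ i ∈ range k, ε i) * δ) := by
  induction k with
  | zero =>
    intro S hS
    simp
  | succ n ih =>
    intro S hS
    have h1 := ih (fun i hi => hP i (le_trans hi (Nat.le_succ n)))
      (fun i hi => hε i (Nat.lt_succ_of_lt hi))
      (fun i hi => h i (Nat.lt_succ_of_lt hi)) S hS
    have h2 := h n (Nat.lt_succ_self n) S hS
    set A := ∑ i ∈ range n, ε i with hAdef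
    have hA : 0 ≤ A := Finset.sum_nonneg fun i hi => hε i (Nat.lt_succ_of_lt (mem_range.mp hi))
    have hεn : 0 ≤ ε n := hε n (Nat.lt_succ_self n)
    rw [Finset.sum_range_succ]
    have hexp : Real.exp A ≤ Real.exp (A + ε n) := Real.exp_le_exp.mpr (by linarith)
    calc (P 0 S).toReal
        ≤ Real.exp A * (P n S).toReal + n * Real.exp A * δ := h1
      _ ≤ Real.exp A * (Real.exp (ε n) * (P (n+1) S).toReal + δ) + n * Real.exp A * δ := by
          nlinarith [Real.exp_pos A]
      _ = Real.exp (A + ε n) * (P (n+1) S).toReal + ((n : ℝ)+1) * Real.exp A * δ := by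
          rw [Real.exp_add]; ring
      _ ≤ Real.exp (A + ε n) * (P (n+1) S).toReal + ((n : ℝ)+1) * Real.exp (A + ε n) * δ := by
          nlinarith [mul_le_mul_of_nonneg_left hexp (by positivity : (0:ℝ) ≤ ((n:ℝ)+1)*δ)]
      _ = _ := by push_cast; ring
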